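/- Let λ > 0 and data X_1,…,X_n ∈ ℝ^d, Y_1,…,Y_n ∈ ℝ be given. Let (e_j) be a sequence of positive reals with e_j → 0, and for each j let (μ_j,β_j) be a minimizer of L_{e_j} over ℝ × ℝ^d. If (μ_j,β_j) converges to some point (μ*,β*), then (μ*,β*) minimizes L(μ,β) = Σ_{i=1}^n |μ + ⟨X_i,β⟩ − Y_i| + (λ/2)‖β‖₂² over ℝ × ℝ^d. -/

import Mathlib

open scoped BigOperators
open Filter

/-- The perturbed ridge-penalized least-absolute-deviation objective
`L_e(μ,β) = Σ_i [ |r_i| − (e/2)·ln(e + |r_i|) ] + (λ/2)‖β‖₂²`,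
where `r_i = μ + ⟨X_i,β⟩ − Y_i`. -/
noncomputable def perturbedLAD {n d : ℕ} (e lam : ℝ) (X : Fin n → Fin d → ℝ)
    (Y : Fin n → ℝ) (p : ℝ × (Fin d → ℝ)) : ℝ :=
  (∑ i, (|p.1 + (∑ j, X i j * p.2 j) - Y i|
    - e / 2 * Real.log (e + |p.1 + (∑ j, X i j * p.2 j) - Y i|)))
    + lam / 2 * ∑ j, (p.2 j) ^ 2

/-- The unperturbed ridge-penalized least-absolute-deviation objective
`L(μ,β) = Σ_i |μ + ⟨X_i,β⟩ − Y_i| + (λ/2)‖β‖₂²`. -/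
noncomputable def ladObj {n d : ℕ} (lam : ℝ) (X : Fin n → Fin d → ℝ)
    (Y : Fin n → ℝ) (p : ℝ × (Fin d → ℝ)) : ℝ :=
  (∑ i, |p.1 + (∑ j, X i j * p.2 j) - Y i|) + lam / 2 * ∑ j, (p.2 j) ^ 2

/-- Auxiliary: `(e j / 2) * log (e j + a j) → 0` when `e j → 0⁺` and `a j → a* ≥ 0`. -/
lemma aux_correction_tendsto (e : ℕ → ℝ) (he : ∀ j, 0 < e j)
    (he0 : Tendsto e atTop (nhds 0)) (a : ℕ → ℝ) (ha : ∀ j, 0 ≤ a j)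
    (astar : ℝ) (haconv : Tendsto a atTop (nhds astar)) :
    Tendsto (fun j => e j / 2 * Real.log (e j + a j)) atTop (nhds 0) := by
  have hastar : 0 ≤ astar := ge_of_tendsto' haconv ha
  set M : ℝ := astar + 2 with hM
  -- lower bound: (e j / 2) * log (e j) ; upper bound: (e j / 2) * log M
  have hlow : Tendsto (fun j => e j / 2 * Real.log (e j)) atTop (nhds 0) := by
    have h : Tendsto (fun j => (e j) * Real.log (e j)) atTop (nhds 0) := by
      have := (Real.continuous_mul_log.tendsto 0).comp he0
      simpa [Function.comp_def] using this
    have h2 : Tendsto (fun j => e j * Real.log (e j) / 2) atTop (nhds 0) := by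
      simpa using h.div_const 2
    convert h2 using 2 with j
    ring
  have hup : Tendsto (fun j => e j / 2 * Real.log M) atTop (nhds 0) := by
    have := (he0.div_const 2).mul_const (Real.log M)
    simpa using this
  -- eventually bounds hold
  have hev1 : ∀ᶠ j in atTop, e j ≤ 1 := by
    have := he0.eventually (eventually_le_nhds (by norm_num : (0:ℝ) < 1))
    exact this
  have hev2 : ∀ᶠ j in atTop, a j ≤ astar + 1 := by
    have := haconv.eventually (eventually_le_nhds (by linarith : astar < astar + 1))
    exact this
  refine tendsto_of_tendsto_of_tendsto_of_le_of_le' hlow hup ?_ ?_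
  · filter_upwards with j
    have h1 : e j ≤ e j + a j := by linarith [ha j]
    exact mul_le_mul_of_nonneg_left (Real.log_le_log (he j) h1)
      (by linarith [(he j).le])
  · filter_upwards [hev1, hev2] with j h1 h2
    have h3 : e j + a j ≤ M := by simp only [hM]; linarith
    have h4 : 0 < e j + a j := by linarith [he j, ha j]
    exact mul_le_mul_of_nonneg_left (Real.log_le_log h4 h3)
      (by linarith [(he j).le])

lemma key_tendsto {n d : ℕ} (lam : ℝ) (X : Fin n → Fin d → ℝ) (Y : Fin n → ℝ)
    (e : ℕ → ℝ) (he : ∀ j, 0 < e j) (he0 : Tendsto e atTop (nhds 0))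
    (q : ℕ → ℝ × (Fin d → ℝ)) (qstar : ℝ × (Fin d → ℝ))
    (hq : Tendsto q atTop (nhds qstar)) :
    Tendsto (fun j => perturbedLAD (e j) lam X Y (q j)) atTop
      (nhds (ladObj lam X Y qstar)) := by
  have hcontR : ∀ i : Fin n, Continuous fun p : ℝ × (Fin d → ℝ) =>
      |p.1 + (∑ j, X i j * p.2 j) - Y i| := by
    intro i
    fun_prop
  have hdecomp : ∀ j, perturbedLAD (e j) lam X Y (q j)
      = ladObj lam X Y (q j)
        - ∑ i, e j / 2 * Real.log (e j + |(q j).1 + (∑ k, X i k * (q j).2 k) - Y i|) := by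
    intro j
    simp only [perturbedLAD, ladObj, Finset.sum_sub_distrib]
    ring
  simp only [hdecomp]
  have hlad : Continuous (ladObj lam X Y) := by
    unfold ladObj
    fun_prop
  have h1 : Tendsto (fun j => ladObj lam X Y (q j)) atTop (nhds (ladObj lam X Y qstar)) :=
    (hlad.tendsto qstar).comp hq
  have h2 : Tendsto (fun j => ∑ i,
      e j / 2 * Real.log (e j + |(q j).1 + (∑ k, X i k * (q j).2 k) - Y i|))
      atTop (nhds 0) := by
    have : Tendsto (fun j => ∑ i : Fin n,
        e j / 2 * Real.log (e j + |(q j).1 + (∑ k, X i k * (q j).2 k) - Y i|))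
        atTop (nhds (∑ _i : Fin n, (0:ℝ))) := by
      refine tendsto_finset_sum _ fun i _ => ?_
      exact aux_correction_tendsto e he he0 _ (fun j => abs_nonneg _)
        _ (((hcontR i).tendsto qstar).comp hq)
    simpa using this
  simpa using h1.sub h2

/-- If `e_j → 0`, `(μ_j,β_j)` minimizes `L_{e_j}` for each `j`, and the
sequence `(μ_j,β_j)` converges to `(μ*,β*)`, then `(μ*,β*)` minimizes `L`. -/
theorem limit_of_perturbed_minimizers_minimizes {n d : ℕ} (lam : ℝ)
    (hlam : 0 < lam) (X : Fin n → Fin d → ℝ) (Y : Fin n → ℝ)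
    (e : ℕ → ℝ) (he : ∀ j, 0 < e j) (he0 : Tendsto e atTop (nhds 0))
    (p : ℕ → ℝ × (Fin d → ℝ))
    (hmin : ∀ j, IsMinOn (perturbedLAD (e j) lam X Y) Set.univ (p j))
    (pstar : ℝ × (Fin d → ℝ)) (hconv : Tendsto p atTop (nhds pstar)) :
    IsMinOn (ladObj lam X Y) Set.univ pstar := by
  rw [isMinOn_iff]
  intro q _
  have hle : ∀ j, perturbedLAD (e j) lam X Y (p j) ≤ perturbedLAD (e j) lam X Y q :=
    fun j => isMinOn_iff.mp (hmin j) q (Set.mem_univ q)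
  have h1 := key_tendsto lam X Y e he he0 p pstar hconv
  have h2 := key_tendsto lam X Y e he he0 (fun _ => q) q tendsto_const_nhds
  exact le_of_tendsto_of_tendsto' h1 h2 hle
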